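/- For every labeling T of Y(λ): (a) v_T ≠ 0; (b) ρ(D) v_T = (Σ_{i=1}^k λ_i d_i) v_T for every diagonal matrix D = diag(d_1,…,d_n); (c) ρ(E_{ab}) v_T = 0 for all 1 ≤ a < b ≤ n. In particular v_T ∈ HW(λ), i.e., v_T is a highest weight vector of weight λ_1 L_1 + … + λ_k L_k. -/

import Mathlib

open Finset

noncomputable section

/-- `V^{⊗N}` for `V = ℂ^n`, modeled on the basis indexed by functions `Fin N → Fin n`
(`f` corresponds to the basis vector `e_f = v_{f 1} ⊗ ⋯ ⊗ v_{f N}`). -/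
abbrev TensorPow (n N : ℕ) := (Fin N → Fin n) → ℂ

/-- The action of `σ ∈ S_N` on `V^{⊗N}` permuting the tensor factors
(on basis vectors, `σ · e_g = e_{g ∘ σ⁻¹}`). -/
def permAct (n N : ℕ) (σ : Equiv.Perm (Fin N)) (w : TensorPow n N) : TensorPow n N :=
  fun f => w (f ∘ σ)

/-- The action `ρ(X) = Σ_{p=1}^N id ⊗ ⋯ ⊗ X ⊗ ⋯ ⊗ id` of an `n×n` matrix `X`
on `V^{⊗N}`. -/
def rho (n N : ℕ) (X : Matrix (Fin n) (Fin n) ℂ) (w : TensorPow n N) : TensorPow n N :=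
  fun f => ∑ p : Fin N, ∑ b : Fin n, X (f p) b * w (Function.update f p b)

/-- `lam` is a partition of `N` with exactly `k` (nonzero, decreasing) parts, recorded as a
function `Fin n → ℕ` supported on the first `k` indices. -/
def IsPartition (n N k : ℕ) (lam : Fin n → ℕ) : Prop :=
  (∀ i j : Fin n, i ≤ j → lam j ≤ lam i) ∧
  (∀ i : Fin n, lam i ≠ 0 ↔ (i : ℕ) < k) ∧
  ∑ i : Fin n, lam i = N

/-- The highest weight space `HW(λ) ⊆ V^{⊗N}`: the vectors `w` with
`ρ(D)w = (Σ_i λ_i d_i)·w` for every diagonal `D = diag(d_1,…,d_n)` and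
`ρ(E_{ab})w = 0` for all `a < b`. -/
def HW (n N : ℕ) (lam : Fin n → ℕ) : Set (TensorPow n N) :=
  {w | (∀ d : Fin n → ℂ,
          rho n N (Matrix.diagonal d) w = (∑ i : Fin n, (lam i : ℂ) * d i) • w) ∧
       ∀ a b : Fin n, a < b → rho n N (Matrix.single a b (1 : ℂ)) w = 0}

/-- A labeling `T` of the Young diagram `Y(λ)`, encoded by its inverse: label `j` sits in the
box in row `row j` and column `col j` (both 0-indexed); the boxes must lie in the diagram and
the map `j ↦ (row j, col j)` must be injective (hence a bijection onto `Y(λ)`). -/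
def IsLabeling (n N : ℕ) (lam : Fin n → ℕ) (row : Fin N → Fin n) (col : Fin N → ℕ) : Prop :=
  (∀ j, col j < lam (row j)) ∧ Function.Injective (fun j => (row j, col j))

/-- The basis vector `e_g = v_{g 1} ⊗ ⋯ ⊗ v_{g N}` of `V^{⊗N}`. -/
def eBase (n N : ℕ) (g : Fin N → Fin n) : TensorPow n N := fun f => if f = g then 1 else 0

/-- `v_T = Σ_{σ ∈ C(T)} sgn(σ)·e_{σT}`, where `C(T)` is the column stabilizer of the
labeling `T` (the permutations preserving the column of every label), and
`e_{σT} = e_{row ∘ σ⁻¹}` (the row word of the relabeled tableau). -/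
def vT (n N : ℕ) (row : Fin N → Fin n) (col : Fin N → ℕ) : TensorPow n N :=
  ∑ σ ∈ Finset.univ.filter (fun σ : Equiv.Perm (Fin N) => ∀ j, col (σ j) = col j),
    ((Equiv.Perm.sign σ : ℤ) : ℂ) • eBase n N (row ∘ σ.symm)

section Aux

variable {n N : ℕ}

lemma rho_add (X : Matrix (Fin n) (Fin n) ℂ) (u v : TensorPow n N) :
    rho n N X (u + v) = rho n N X u + rho n N X v := by
  funext f
  simp [rho, mul_add, Finset.sum_add_distrib]

lemma rho_sum {ι : Type*} (X : Matrix (Fin n) (Fin n) ℂ) (s : Finset ι)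
    (F : ι → TensorPow n N) :
    rho n N X (∑ i ∈ s, F i) = ∑ i ∈ s, rho n N X (F i) := by
  classical
  induction s using Finset.induction with
  | empty => funext f; simp [rho]
  | @insert _ _ h ih => rw [Finset.sum_insert h, rho_add, ih, Finset.sum_insert h]

lemma rho_smul (X : Matrix (Fin n) (Fin n) ℂ) (c : ℂ) (w : TensorPow n N) :
    rho n N X (c • w) = c • rho n N X w := by
  funext f
  simp only [rho, Pi.smul_apply, smul_eq_mul, Finset.mul_sum]
  refine Finset.sum_congr rfl fun p _ => Finset.sum_congr rfl fun b _ => ?_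
  ring

lemma rho_diag (d : Fin n → ℂ) (w : TensorPow n N) (f : Fin N → Fin n) :
    rho n N (Matrix.diagonal d) w f = (∑ p, d (f p)) * w f := by
  simp only [rho, Matrix.diagonal_apply, ite_mul, zero_mul, Finset.sum_ite_eq,
    Finset.mem_univ, if_true, Function.update_eq_self, Finset.sum_mul]

lemma rho_std (a b : Fin n) (hab : a ≠ b) (g : Fin N → Fin n) :
    rho n N (Matrix.single a b 1) (eBase n N g) =
      ∑ q ∈ univ.filter (fun q => g q = b), eBase n N (Function.update g q a) := by
  funext f
  simp only [rho, eBase, Matrix.single, Matrix.of_apply, Finset.sum_apply,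
    Finset.sum_filter, ite_mul, one_mul, zero_mul, ite_and]
  refine Finset.sum_congr rfl fun p _ => ?_
  by_cases hp : a = f p
  · simp only [if_pos hp, Finset.sum_ite_eq, Finset.mem_univ, if_true]
    by_cases h2 : Function.update f p b = g
    · have h3 : g p = b := by rw [← h2, Function.update_self]
      have h4 : f = Function.update g p a := by
        rw [← h2, Function.update_idem, hp, Function.update_eq_self]
      rw [if_pos h2, if_pos h3, if_pos h4]
    · rw [if_neg h2]
      have : ¬(g p = b ∧ f = Function.update g p a) := by
        rintro ⟨h3, h4⟩
        exact h2 (by rw [h4, Function.update_idem, ← h3, Function.update_eq_self])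
      split_ifs with h3 h4
      · exact absurd ⟨h3, h4⟩ this
      · rfl
      · rfl
  · simp only [if_neg hp, Finset.sum_const_zero]
    split_ifs with h3 h4
    · exact absurd (by rw [h4, Function.update_self]) hp
    · rfl
    · rfl

lemma pair_vanish (col : Fin N → ℕ) (g : Fin N → Fin n) (q j' : Fin N)
    (hqj : q ≠ j') (hcol : col q = col j') (hg : g ∘ (Equiv.swap q j') = g) :
    ∑ σ ∈ univ.filter (fun σ : Equiv.Perm (Fin N) => ∀ j, col (σ j) = col j),
      ((Equiv.Perm.sign σ : ℤ) : ℂ) • eBase n N (g ∘ σ.symm) = 0 := by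
  set τ := Equiv.swap q j' with hτ
  have hτcol : ∀ j, col (τ j) = col j := by
    intro j
    rcases Equiv.swap_apply_def q j' j with _
    by_cases h1 : j = q
    · simp [hτ, h1, Equiv.swap_apply_left, ← hcol]
    · by_cases h2 : j = j'
      · simp [hτ, h2, Equiv.swap_apply_right, hcol]
      · simp [hτ, Equiv.swap_apply_of_ne_of_ne h1 h2]
  set S := ∑ σ ∈ univ.filter (fun σ : Equiv.Perm (Fin N) => ∀ j, col (σ j) = col j),
      ((Equiv.Perm.sign σ : ℤ) : ℂ) • eBase n N (g ∘ σ.symm) with hS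
  have key : S = -S := by
    rw [hS, ← Finset.sum_neg_distrib]
    refine Finset.sum_equiv (Equiv.mulRight τ) ?_ ?_
    · intro σ
      simp only [Finset.mem_filter, Finset.mem_univ, true_and, Equiv.coe_mulRight]
      constructor
      · intro h j
        rw [Equiv.Perm.mul_apply, h (τ j), hτcol j]
      · intro h j
        have := h (τ j)
        rw [Equiv.Perm.mul_apply, Equiv.swap_apply_self] at this
        rw [this, hτcol j]
    · intro σ _
      simp only [Equiv.coe_mulRight]
      have hsign : ((Equiv.Perm.sign (σ * τ) : ℤ) : ℂ) = -((Equiv.Perm.sign σ : ℤ) : ℂ) := by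
        rw [map_mul, hτ, Equiv.Perm.sign_swap hqj]
        push_cast
        ring
      have hbase : g ∘ (σ * τ).symm = g ∘ σ.symm := by
        funext x
        have : (σ * τ).symm x = τ.symm (σ.symm x) := rfl
        rw [Function.comp_apply, this, Equiv.symm_swap]
        exact congrFun hg (σ.symm x)
      rw [hsign, hbase, neg_smul, neg_neg]
  have h2 : (2 : ℂ) • S = 0 := by
    rw [two_smul]
    nth_rewrite 2 [key]
    exact add_neg_cancel S
  rcases smul_eq_zero.mp h2 with h | h
  · exact absurd h two_ne_zero
  · exact h

lemma fiber_card (lam : Fin n → ℕ) (row : Fin N → Fin n) (col : Fin N → ℕ)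
    (hb : ∀ j, col j < lam (row j)) (hinj : Function.Injective (fun j => (row j, col j)))
    (hsum : ∑ i, lam i = N) (i : Fin n) :
    (univ.filter fun p => row p = i).card = lam i := by
  have hle : ∀ i : Fin n, (univ.filter fun p => row p = i).card ≤ lam i := by
    intro i
    have h1 : (univ.filter fun p => row p = i).card ≤ (Finset.range (lam i)).card := by
      apply Finset.card_le_card_of_injOn col
      · intro p hp
        simp only [Finset.coe_filter, Set.mem_setOf_eq, Finset.mem_filter, Finset.mem_univ, true_and] at hp
        simpa [hp] using hb p
      · intro p hp p' hp' hcc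
        simp only [Finset.coe_filter, Set.mem_setOf_eq, Finset.mem_univ, true_and] at hp hp'
        exact hinj (show (row p, col p) = (row p', col p') by rw [hp, hp', hcc])
    simpa using h1
  have hsum2 : ∑ i : Fin n, (univ.filter fun p => row p = i).card = N := by
    have := Finset.card_eq_sum_card_fiberwise
      (f := row) (s := (univ : Finset (Fin N))) (t := univ) (fun x _ => Finset.mem_univ _)
    simpa using this.symm
  exact (Finset.sum_eq_sum_iff_of_le (fun i _ => hle i)).mp (by rw [hsum2, hsum]) i (Finset.mem_univ i)

lemma box_surj (lam : Fin n → ℕ) (row : Fin N → Fin n) (col : Fin N → ℕ)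
    (hb : ∀ j, col j < lam (row j)) (hinj : Function.Injective (fun j => (row j, col j)))
    (hsum : ∑ i, lam i = N) (i : Fin n) (c : ℕ) (hc : c < lam i) :
    ∃ j, row j = i ∧ col j = c := by
  have hinj' : Set.InjOn col (univ.filter fun p => row p = i) := by
    intro p hp p' hp' hcc
    simp only [Finset.coe_filter, Set.mem_setOf_eq, Finset.mem_univ, true_and] at hp hp'
    exact hinj (show (row p, col p) = (row p', col p') by rw [hp, hp', hcc])
  have himg : (univ.filter fun p => row p = i).image col ⊆ Finset.range (lam i) := by
    intro x hx
    obtain ⟨j, hj, rfl⟩ := Finset.mem_image.mp hx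
    simp only [Finset.mem_filter, Finset.mem_univ, true_and] at hj
    simpa [hj] using hb j
  have hcard : (Finset.range (lam i)).card ≤ ((univ.filter fun p => row p = i).image col).card := by
    rw [Finset.card_image_of_injOn hinj', fiber_card lam row col hb hinj hsum, Finset.card_range]
  have heq := Finset.eq_of_subset_of_card_le himg hcard
  have : c ∈ (univ.filter fun p => row p = i).image col := by
    rw [heq]; exact Finset.mem_range.mpr hc
  obtain ⟨j, hj, hcj⟩ := Finset.mem_image.mp this
  exact ⟨j, (Finset.mem_filter.mp hj).2, hcj⟩

lemma sum_d_row (lam : Fin n → ℕ) (row : Fin N → Fin n) (col : Fin N → ℕ)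
    (hb : ∀ j, col j < lam (row j)) (hinj : Function.Injective (fun j => (row j, col j)))
    (hsum : ∑ i, lam i = N) (d : Fin n → ℂ) :
    ∑ p : Fin N, d (row p) = ∑ i : Fin n, (lam i : ℂ) * d i := by
  rw [← Finset.sum_fiberwise (univ : Finset (Fin N)) row (fun p => d (row p))]
  refine Finset.sum_congr rfl fun i _ => ?_
  rw [Finset.sum_congr rfl (fun p hp => by
    rw [(Finset.mem_filter.mp hp).2] : ∀ p ∈ univ.filter fun p => row p = i, d (row p) = d i)]
  rw [Finset.sum_const, fiber_card lam row col hb hinj hsum, nsmul_eq_mul]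

end Aux

/-- for every labeling `T` of `Y(λ)`: (a) `v_T ≠ 0`; (b) `v_T` is an
eigenvector of every `ρ(diag(d))` with eigenvalue `Σ_i λ_i d_i`; (c) `ρ(E_{ab}) v_T = 0`
for `a < b`. In particular `v_T ∈ HW(λ)`. -/
theorem vT_highest_weight (n N k : ℕ) (hn : 0 < n) (hN : 0 < N) (hk : 0 < k) (hkn : k < n)
    (lam : Fin n → ℕ) (hlam : IsPartition n N k lam)
    (row : Fin N → Fin n) (col : Fin N → ℕ) (hT : IsLabeling n N lam row col) :
    vT n N row col ≠ 0 ∧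
    (∀ d : Fin n → ℂ,
      rho n N (Matrix.diagonal d) (vT n N row col) =
        (∑ i : Fin n, (lam i : ℂ) * d i) • vT n N row col) ∧
    (∀ a b : Fin n, a < b →
      rho n N (Matrix.single a b (1 : ℂ)) (vT n N row col) = 0) ∧
    vT n N row col ∈ HW n N lam := by
  obtain ⟨hdec, hsupp, hsum⟩ := hlam
  obtain ⟨hbox, hinj⟩ := hT
  -- part (a)
  have ha1 : vT n N row col row = 1 := by
    rw [vT, Finset.sum_apply]
    rw [Finset.sum_eq_single (1 : Equiv.Perm (Fin N))]
    · simp [eBase, Equiv.Perm.one_symm]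
    · intro σ hσ hne
      simp only [Finset.mem_filter, Finset.mem_univ, true_and] at hσ
      simp only [Pi.smul_apply, eBase, smul_eq_mul]
      rw [if_neg, mul_zero]
      intro heq
      apply hne
      refine Equiv.ext fun j => ?_
      have h1 : row (σ j) = row j := by
        have := congrFun heq (σ j)
        simpa using this
      show σ j = j
      exact hinj (show (row (σ j), col (σ j)) = (row j, col j) by rw [h1, hσ j])
    · intro h1
      exact absurd (Finset.mem_filter.mpr ⟨Finset.mem_univ _, fun j => rfl⟩) h1
  have ha : vT n N row col ≠ 0 := by
    intro h
    rw [h] at ha1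
    exact one_ne_zero ha1.symm
  -- part (b)
  have hbpart : ∀ d : Fin n → ℂ,
      rho n N (Matrix.diagonal d) (vT n N row col) =
        (∑ i : Fin n, (lam i : ℂ) * d i) • vT n N row col := by
    intro d
    funext f
    rw [rho_diag]
    simp only [Pi.smul_apply, smul_eq_mul]
    by_cases hf : vT n N row col f = 0
    · rw [hf, mul_zero, mul_zero]
    · obtain ⟨σ, hσ, hfe⟩ : ∃ σ : Equiv.Perm (Fin N),
          (∀ j, col (σ j) = col j) ∧ f = row ∘ σ.symm := by
        by_contra hcon
        push_neg at hcon
        apply hf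
        rw [vT, Finset.sum_apply]
        refine Finset.sum_eq_zero fun σ hσ => ?_
        simp only [Finset.mem_filter, Finset.mem_univ, true_and] at hσ
        simp [eBase, hcon σ hσ]
      congr 1
      rw [hfe]
      calc ∑ p : Fin N, d ((row ∘ σ.symm) p) = ∑ p : Fin N, d (row p) :=
            Equiv.sum_comp σ.symm (fun p => d (row p))
        _ = ∑ i : Fin n, (lam i : ℂ) * d i := sum_d_row lam row col hbox hinj hsum d
  -- part (c)
  have hcpart : ∀ a b : Fin n, a < b →
      rho n N (Matrix.single a b (1 : ℂ)) (vT n N row col) = 0 := by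
    intro a b hab
    have step : ∀ σ ∈ Finset.univ.filter
        (fun σ : Equiv.Perm (Fin N) => ∀ j, col (σ j) = col j),
        rho n N (Matrix.single a b (1 : ℂ))
          (((Equiv.Perm.sign σ : ℤ) : ℂ) • eBase n N (row ∘ σ.symm)) =
        ∑ q ∈ univ.filter (fun q => row q = b),
          ((Equiv.Perm.sign σ : ℤ) : ℂ) • eBase n N ((Function.update row q a) ∘ σ.symm) := by
      intro σ _
      rw [rho_smul, rho_std a b hab.ne]
      rw [← Finset.smul_sum]
      congr 1
      rw [Finset.sum_filter, Finset.sum_filter,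
        ← Equiv.sum_comp σ (fun q => if (row ∘ σ.symm) q = b then
            eBase n N (Function.update (row ∘ σ.symm) q a) else 0)]
      refine Finset.sum_congr rfl fun q _ => ?_
      simp only [Function.comp_apply, Equiv.symm_apply_apply]
      rw [Function.update_comp_equiv row σ.symm q a]
      simp
    rw [vT, rho_sum, Finset.sum_congr rfl step, Finset.sum_comm]
    refine Finset.sum_eq_zero fun q hq => ?_
    have hrq : row q = b := (Finset.mem_filter.mp hq).2
    have hcq : col q < lam a := by
      have h1 : col q < lam b := hrq ▸ hbox q
      exact lt_of_lt_of_le h1 (hdec a b hab.le)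
    obtain ⟨j', hj1, hj2⟩ := box_surj lam row col hbox hinj hsum a (col q) hcq
    have hqj : q ≠ j' := by
      intro h
      rw [← h] at hj1
      exact hab.ne' (hrq ▸ hj1)
    have hg : (Function.update row q a) ∘ (Equiv.swap q j') = Function.update row q a := by
      funext p
      simp only [Function.comp_apply]
      by_cases h1 : p = q
      · subst h1
        rw [Equiv.swap_apply_left, Function.update_of_ne (Ne.symm hqj), hj1,
          Function.update_self]
      · by_cases h2 : p = j'
        · subst h2
          rw [Equiv.swap_apply_right, Function.update_self,
            Function.update_of_ne (Ne.symm hqj), hj1]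
        · rw [Equiv.swap_apply_of_ne_of_ne h1 h2]
    exact pair_vanish col (Function.update row q a) q j' hqj hj2.symm hg
  exact ⟨ha, hbpart, hcpart, hbpart, hcpart⟩


end
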